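/- Let 0 < q < 1 and a, b ∈ ℂ. Define polynomials h_n ∈ ℂ[x] by h_0 = 1, h_1 = 2x, and 2x·h_n = h_{n+1} + (1−q^n)·h_{n−1} for n ≥ 1 (the continuous q-Hermite polynomials p_n(x;0,0,0,0|q)); and define Q_n ∈ ℂ[x] by Q_0 = 1, Q_1 = 2x − (a+b), and 2x·Q_n = Q_{n+1} + q^n·(a+b)·Q_n + (1−q^n)(1−q^{n−1}·ab)·Q_{n−1} for n ≥ 1 (the Al-Salam–Chihara polynomials p_n(x;a,b,0,0|q)). Then for every n ≥ 0: h_n = Σ_{k=0}^{n} c_{n,k}·Q_k, where c_{n,k} = Σ_{ℓ=k}^{n} binom_q(n,ℓ)·binom_q(ℓ,k)·a^{n−ℓ}·b^{ℓ−k}. -/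
import Mathlib


noncomputable section

open scoped BigOperators

/-- The Gaussian (q-)binomial coefficient, characterized by
`qBinom q n 0 = 1`, `qBinom q 0 (k+1) = 0` and the Pascal-type rule
`qBinom q (n+1) (k+1) = q^(k+1) * qBinom q n (k+1) + qBinom q n k`. -/
def qBinom (q : ℂ) : ℕ → ℕ → ℂ
  | _, 0 => 1
  | 0, _ + 1 => 0
  | n + 1, k + 1 => q ^ (k + 1) * qBinom q n (k + 1) + qBinom q n k

/-- The continuous q-Hermite polynomials `h_n = p_n(x;0,0,0,0|q)`:
`h_0 = 1`, `h_1 = 2x`, and `2x·h_n = h_{n+1} + (1-q^n)·h_{n-1}` for `n ≥ 1`. -/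
def hPoly (q : ℂ) : ℕ → Polynomial ℂ
  | 0 => 1
  | 1 => 2 * Polynomial.X
  | n + 2 =>
      2 * Polynomial.X * hPoly q (n + 1) - Polynomial.C (1 - q ^ (n + 1)) * hPoly q n

/-- The Al-Salam–Chihara polynomials `Q_n = p_n(x;a,b,0,0|q)`:
`Q_0 = 1`, `Q_1 = 2x - (a+b)`, and
`2x·Q_n = Q_{n+1} + q^n(a+b)Q_n + (1-q^n)(1-q^{n-1}ab)Q_{n-1}` for `n ≥ 1`. -/
def ascPoly (q a b : ℂ) : ℕ → Polynomial ℂ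
  | 0 => 1
  | 1 => 2 * Polynomial.X - Polynomial.C (a + b)
  | n + 2 =>
      (2 * Polynomial.X - Polynomial.C (q ^ (n + 1) * (a + b))) * ascPoly q a b (n + 1)
        - Polynomial.C ((1 - q ^ (n + 1)) * (1 - q ^ n * a * b)) * ascPoly q a b n

/-- The connection coefficients `c_{n,k} = Σ_{ℓ=k}^{n} binom_q(n,ℓ)·binom_q(ℓ,k)·a^{n-ℓ}·b^{ℓ-k}`. -/
def cCoef (q a b : ℂ) (n k : ℕ) : ℂ :=
  ∑ ℓ ∈ Finset.Icc k n, qBinom q n ℓ * qBinom q ℓ k * a ^ (n - ℓ) * b ^ (ℓ - k)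

def qfact (q : ℂ) : ℕ → ℂ
  | 0 => 1
  | n + 1 => qfact q n * (1 - q ^ (n + 1))

lemma qfact_succ (q : ℂ) (n : ℕ) : qfact q (n+1) = qfact q n * (1 - q ^ (n+1)) := rfl

lemma qBinom_zero (q : ℂ) (n : ℕ) : qBinom q n 0 = 1 := by cases n <;> rfl

lemma qBinom_eq_zero (q : ℂ) : ∀ {n k : ℕ}, n < k → qBinom q n k = 0 := by
  intro n
  induction n with
  | zero => intro k hk; match k, hk with | k+1, _ => rfl
  | succ n ih =>
    intro k hk
    match k, hk with
    | k+1, hk =>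
      show q ^ (k+1) * qBinom q n (k+1) + qBinom q n k = 0
      rw [ih (by omega), ih (by omega)]; ring

lemma qBinom_self (q : ℂ) : ∀ n : ℕ, qBinom q n n = 1 := by
  intro n
  induction n with
  | zero => rfl
  | succ n ih =>
    show q ^ (n+1) * qBinom q n (n+1) + qBinom q n n = 1
    rw [qBinom_eq_zero q (by omega), ih]; ring

lemma qBinom_fact (q : ℂ) : ∀ n k : ℕ, k ≤ n →
    qBinom q n k * qfact q k * qfact q (n - k) = qfact q n := by
  intro n
  induction n with
  | zero => intro k hk; interval_cases k; simp [qBinom, qfact]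
  | succ n ih =>
    intro k hk
    match k with
    | 0 => simp [qBinom_zero, qfact]
    | k + 1 =>
      rcases Nat.lt_or_ge k n with hkn | hkn
      · -- k + 1 ≤ n
        obtain ⟨d, rfl⟩ : ∃ d, n = k + 1 + d := ⟨n - k - 1, by omega⟩
        have h1 := ih (k+1) (by omega)
        have h2 := ih k (by omega)
        have e1 : k + 1 + d - (k + 1) = d := by omega
        have e2 : k + 1 + d - k = d + 1 := by omega
        have e3 : k + 1 + d + 1 - (k + 1) = d + 1 := by omega
        rw [e1] at h1; rw [e2] at h2
        show (q ^ (k+1) * qBinom q (k+1+d) (k+1) + qBinom q (k+1+d) k) * qfact q (k+1)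
            * qfact q (k+1+d+1 - (k+1)) = qfact q (k+1+d+1)
        rw [e3]
        show (q ^ (k+1) * qBinom q (k+1+d) (k+1) + qBinom q (k+1+d) k) * qfact q (k+1)
            * qfact q (d+1) = qfact q (k+1+d+1)
        simp only [qfact_succ] at h1 h2 ⊢
        linear_combination q^(k+1)*(1-q^(d+1))*h1 + (1-q^(k+1))*h2
      · -- k = n or k > n ; here k+1 ≤ n+1 and k ≥ n so k = n
        have : k = n := by omega
        subst this
        show (q ^ (k+1) * qBinom q k (k+1) + qBinom q k k) * qfact q (k+1)
            * qfact q (k+1 - (k+1)) = qfact q (k+1)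
        rw [qBinom_eq_zero q (by omega), qBinom_self, Nat.sub_self]
        show (q^(k+1) * 0 + 1) * qfact q (k+1) * 1 = qfact q (k+1)
        ring

section Ident
variable {q : ℂ} (hq : ∀ m : ℕ, 1 - q ^ (m + 1) ≠ 0)
include hq

lemma qfact_ne_zero : ∀ n, qfact q n ≠ 0 := by
  intro n
  induction n with
  | zero => exact one_ne_zero
  | succ n ih => exact mul_ne_zero ih (hq n)

/-- absorption identity -/
lemma qBinom_absorb (n k : ℕ) :
    (1 - q ^ (k + 1)) * qBinom q (n + 1) (k + 1) = (1 - q ^ (n + 1)) * qBinom q n k := by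
  rcases Nat.lt_or_ge n k with h | h
  · rw [qBinom_eq_zero q (by omega), qBinom_eq_zero q h]; ring
  · obtain ⟨d, rfl⟩ : ∃ d, n = k + d := ⟨n - k, by omega⟩
    have h1 := qBinom_fact q (k+d+1) (k+1) (by omega)
    have h2 := qBinom_fact q (k+d) k (by omega)
    have e1 : k + d + 1 - (k + 1) = d := by omega
    have e2 : k + d - k = d := by omega
    rw [e1] at h1; rw [e2] at h2
    apply mul_right_cancel₀ (mul_ne_zero (qfact_ne_zero hq k) (qfact_ne_zero hq d))
    simp only [qfact_succ] at h1 h2 ⊢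
    linear_combination h1 - (1 - q^(k+d+1)) * h2

/-- shift identity -/
lemma qBinom_shift (m k : ℕ) :
    (q ^ k - q ^ m) * qBinom q m k = q ^ k * (1 - q ^ (k + 1)) * qBinom q m (k + 1) := by
  rcases Nat.lt_or_ge k m with h | h
  · obtain ⟨d, rfl⟩ : ∃ d, m = k + 1 + d := ⟨m - k - 1, by omega⟩
    have h1 := qBinom_fact q (k+1+d) k (by omega)
    have h2 := qBinom_fact q (k+1+d) (k+1) (by omega)
    have e1 : k + 1 + d - k = d + 1 := by omega
    have e2 : k + 1 + d - (k + 1) = d := by omega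
    rw [e1] at h1; rw [e2] at h2
    apply mul_right_cancel₀ (mul_ne_zero (qfact_ne_zero hq k) (qfact_ne_zero hq d))
    simp only [qfact_succ] at h1 h2 ⊢
    linear_combination q^k * h1 - q^k * h2
  · rcases Nat.eq_or_lt_of_le h with rfl | h'
    · rw [(qBinom_eq_zero q (Nat.lt_succ_self m) : qBinom q m (m+1) = 0)]; ring
    · rw [qBinom_eq_zero q (by omega), qBinom_eq_zero q (by omega)]; ring

end Ident

/-- the coefficient in the three-term recurrence -/
def eCoef (q a b : ℂ) : ℕ → ℂ
  | 0 => 0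
  | k + 1 => (1 - q ^ (k + 1)) * (1 - q ^ k * a * b)

lemma asc_mulX (q a b : ℂ) : ∀ k : ℕ,
    2 * Polynomial.X * ascPoly q a b k =
      ascPoly q a b (k + 1) + Polynomial.C (q ^ k * (a + b)) * ascPoly q a b k
        + Polynomial.C (eCoef q a b k) * ascPoly q a b (k - 1) := by
  intro k
  match k with
  | 0 =>
    show 2 * Polynomial.X * 1 =
      (2 * Polynomial.X - Polynomial.C (a + b)) + Polynomial.C (q ^ 0 * (a + b)) * 1
        + Polynomial.C 0 * 1
    simp
  | k + 1 =>
    show 2 * Polynomial.X * ascPoly q a b (k+1) =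
      ((2 * Polynomial.X - Polynomial.C (q ^ (k + 1) * (a + b))) * ascPoly q a b (k + 1)
        - Polynomial.C ((1 - q ^ (k + 1)) * (1 - q ^ k * a * b)) * ascPoly q a b k)
      + Polynomial.C (q ^ (k+1) * (a + b)) * ascPoly q a b (k+1)
        + Polynomial.C ((1 - q ^ (k + 1)) * (1 - q ^ k * a * b)) * ascPoly q a b k
    ring

lemma asc_symm (q a b : ℂ) : ∀ n, ascPoly q a b n = ascPoly q b a n := by
  have key : ∀ n, ascPoly q a b n = ascPoly q b a n ∧
      ascPoly q a b (n+1) = ascPoly q b a (n+1) := by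
    intro n
    induction n with
    | zero =>
      constructor
      · rfl
      · show 2 * Polynomial.X - Polynomial.C (a + b) = 2 * Polynomial.X - Polynomial.C (b + a)
        rw [add_comm]
    | succ n ih =>
      refine ⟨ih.2, ?_⟩
      show (2 * Polynomial.X - Polynomial.C (q ^ (n + 1) * (a + b))) * ascPoly q a b (n + 1)
        - Polynomial.C ((1 - q ^ (n + 1)) * (1 - q ^ n * a * b)) * ascPoly q a b n
        = (2 * Polynomial.X - Polynomial.C (q ^ (n + 1) * (b + a))) * ascPoly q b a (n + 1)
        - Polynomial.C ((1 - q ^ (n + 1)) * (1 - q ^ n * b * a)) * ascPoly q b a n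
      rw [ih.1, ih.2, add_comm a b, show q ^ n * a * b = q ^ n * b * a from by ring]
  exact fun n => (key n).1

lemma hPoly_eq_asc (q : ℂ) : ∀ n, hPoly q n = ascPoly q 0 0 n := by
  have key : ∀ n, hPoly q n = ascPoly q 0 0 n ∧ hPoly q (n+1) = ascPoly q 0 0 (n+1) := by
    intro n
    induction n with
    | zero =>
      constructor
      · rfl
      · show 2 * Polynomial.X = 2 * Polynomial.X - Polynomial.C ((0:ℂ) + 0)
        simp
    | succ n ih =>
      refine ⟨ih.2, ?_⟩
      show 2 * Polynomial.X * hPoly q (n + 1) - Polynomial.C (1 - q ^ (n + 1)) * hPoly q n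
        = (2 * Polynomial.X - Polynomial.C (q ^ (n + 1) * ((0:ℂ) + 0))) * ascPoly q 0 0 (n + 1)
        - Polynomial.C ((1 - q ^ (n + 1)) * (1 - q ^ n * 0 * 0)) * ascPoly q 0 0 n
      rw [ih.1, ih.2]
      simp
  exact fun n => (key n).1

open Polynomial in
lemma key_conn {q : ℂ} (hq : ∀ m : ℕ, 1 - q ^ (m + 1) ≠ 0) (a b : ℂ) : ∀ n : ℕ,
    ascPoly q a 0 n =
      ∑ k ∈ Finset.range (n + 1),
        Polynomial.C (qBinom q n k * b ^ (n - k)) * ascPoly q a b k := by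
  have main : ∀ n : ℕ,
      (ascPoly q a 0 n =
        ∑ k ∈ Finset.range (n + 1), C (qBinom q n k * b ^ (n - k)) * ascPoly q a b k) ∧
      (ascPoly q a 0 (n+1) =
        ∑ k ∈ Finset.range (n + 2), C (qBinom q (n+1) k * b ^ (n+1 - k)) * ascPoly q a b k) := by
    intro n
    induction n with
    | zero =>
      constructor
      · rw [Finset.sum_range_one]
        show (1 : Polynomial ℂ) = C (qBinom q 0 0 * b ^ 0) * 1
        rw [qBinom_zero]; simp
      · rw [Finset.sum_range_succ, Finset.sum_range_one]
        show 2 * X - C (a + 0) =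
          C (qBinom q 1 0 * b ^ 1) * 1 + C (qBinom q 1 1 * b ^ 0) * (2 * X - C (a + b))
        rw [qBinom_zero, qBinom_self]
        simp only [map_mul, map_add, one_mul, pow_zero, pow_one, map_one, map_zero]
        ring
    | succ n ih =>
      obtain ⟨ih1, ih2⟩ := ih
      refine ⟨ih2, ?_⟩
      -- step : prove for n+2
      have e1 : ascPoly q a 0 (n+2) =
          (∑ k ∈ Finset.range (n+2),
              (C (qBinom q (n+1) k * b ^ (n+1-k)) * ascPoly q a b (k+1)
               + C (q ^ k * (a+b) * (qBinom q (n+1) k * b ^ (n+1-k))) * ascPoly q a b k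
               + C (eCoef q a b k * (qBinom q (n+1) k * b ^ (n+1-k))) * ascPoly q a b (k-1)
               - C (q ^ (n+1) * a * (qBinom q (n+1) k * b ^ (n+1-k))) * ascPoly q a b k))
          - ∑ k ∈ Finset.range (n+1),
              C ((1 - q ^ (n+1)) * (qBinom q n k * b ^ (n-k))) * ascPoly q a b k := by
        have lhs_eq : ascPoly q a 0 (n+2) =
            (2 * X - C (q ^ (n+1) * a)) * ascPoly q a 0 (n+1)
              - C (1 - q ^ (n+1)) * ascPoly q a 0 n := by
          show (2 * X - C (q ^ (n+1) * (a + 0))) * ascPoly q a 0 (n+1)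
              - C ((1 - q ^ (n+1)) * (1 - q ^ n * a * 0)) * ascPoly q a 0 n = _
          norm_num
        rw [lhs_eq, ih2, ih1, Finset.mul_sum, Finset.mul_sum]
        congr 1
        · apply Finset.sum_congr rfl
          intro k _
          have h := asc_mulX q a b k
          simp only [map_mul] at h ⊢
          linear_combination (C (qBinom q (n+1) k) * C (b ^ (n+1-k))) * h
        · apply Finset.sum_congr rfl
          intro k _
          simp only [map_mul]
          ring
      rw [e1]
      have A1 : ∑ j ∈ Finset.range (n+3),
            C (if j = 0 then (0:ℂ) else qBinom q (n+1) (j-1) * b ^ (n+1-(j-1)))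
              * ascPoly q a b j
          = ∑ k ∈ Finset.range (n+2),
              C (qBinom q (n+1) k * b ^ (n+1-k)) * ascPoly q a b (k+1) := by
        rw [Finset.sum_range_succ' _ (n+2)]
        simp
      have A2 : ∑ j ∈ Finset.range (n+3),
            C (q ^ j * (a+b) * (qBinom q (n+1) j * b ^ (n+1-j))) * ascPoly q a b j
          = ∑ k ∈ Finset.range (n+2),
              C (q ^ k * (a+b) * (qBinom q (n+1) k * b ^ (n+1-k))) * ascPoly q a b k := by
        rw [Finset.sum_range_succ,
          qBinom_eq_zero q (show n+1 < n+2 by omega)]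
        simp
      have A3 : ∑ j ∈ Finset.range (n+3),
            C (eCoef q a b (j+1) * (qBinom q (n+1) (j+1) * b ^ (n+1-(j+1)))) * ascPoly q a b j
          = ∑ k ∈ Finset.range (n+2),
              C (eCoef q a b k * (qBinom q (n+1) k * b ^ (n+1-k))) * ascPoly q a b (k-1) := by
        rw [Finset.sum_range_succ, Finset.sum_range_succ, Finset.sum_range_succ' _ (n+1),
          qBinom_eq_zero q (show n+1 < n+2+1 by omega),
          qBinom_eq_zero q (show n+1 < n+1+1 by omega)]
        simp [eCoef]
      have A4 : ∑ j ∈ Finset.range (n+3),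
            C (q ^ (n+1) * a * (qBinom q (n+1) j * b ^ (n+1-j))) * ascPoly q a b j
          = ∑ k ∈ Finset.range (n+2),
              C (q ^ (n+1) * a * (qBinom q (n+1) k * b ^ (n+1-k))) * ascPoly q a b k := by
        rw [Finset.sum_range_succ,
          qBinom_eq_zero q (show n+1 < n+2 by omega)]
        simp
      have A5 : ∑ j ∈ Finset.range (n+3),
            C ((1 - q ^ (n+1)) * (qBinom q n j * b ^ (n-j))) * ascPoly q a b j
          = ∑ k ∈ Finset.range (n+1),
              C ((1 - q ^ (n+1)) * (qBinom q n k * b ^ (n-k))) * ascPoly q a b k := by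
        rw [Finset.sum_range_succ, Finset.sum_range_succ,
          qBinom_eq_zero q (show n < n+2 by omega),
          qBinom_eq_zero q (show n < n+1 by omega)]
        simp
      simp only [Finset.sum_add_distrib, Finset.sum_sub_distrib]
      rw [← A1, ← A2, ← A3, ← A4, ← A5,
        ← Finset.sum_add_distrib, ← Finset.sum_add_distrib,
        ← Finset.sum_sub_distrib, ← Finset.sum_sub_distrib]
      apply Finset.sum_congr rfl
      intro j hj
      have hj2 : j ≤ n + 2 := by
        have := Finset.mem_range.mp hj; omega
      have hs : (if j = 0 then (0:ℂ) else qBinom q (n+1) (j-1) * b ^ (n+1-(j-1)))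
          + q ^ j * (a+b) * (qBinom q (n+1) j * b ^ (n+1-j))
          + eCoef q a b (j+1) * (qBinom q (n+1) (j+1) * b ^ (n+1-(j+1)))
          - q ^ (n+1) * a * (qBinom q (n+1) j * b ^ (n+1-j))
          - (1 - q ^ (n+1)) * (qBinom q n j * b ^ (n-j))
          = qBinom q (n+2) j * b ^ (n+2-j) := by
        match j, hj2 with
        | 0, _ =>
          have hB := qBinom_absorb hq n 0
          rw [qBinom_zero] at hB
          simp only [eq_self_iff_true, if_true, reduceIte, qBinom_zero, eCoef, Nat.sub_zero,
            Nat.add_sub_cancel, pow_zero, one_mul, mul_one, zero_add]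
          linear_combination (b ^ n * (1 - a * b)) * hB
        | j' + 1, hj2 =>
          rw [if_neg (Nat.succ_ne_zero j'), Nat.add_sub_cancel]
          have hj3 : j' ≤ n + 1 := by omega
          rcases Nat.lt_or_ge j' n with hlt | hge
          · obtain ⟨e, rfl⟩ : ∃ e, n = j' + 1 + e := ⟨n - j' - 1, by omega⟩
            have E1 : j' + 1 + e + 1 - j' = e + 2 := by omega
            have E2 : j' + 1 + e + 1 - (j' + 1) = e + 1 := by omega
            have E3 : j' + 1 + e + 1 - (j' + 1 + 1) = e := by omega
            have E4 : j' + 1 + e - (j' + 1) = e := by omega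
            have E5 : j' + 1 + e + 2 - (j' + 1) = e + 2 := by omega
            rw [E1, E2, E3, E4, E5]
            have hP : qBinom q (j'+1+e+2) (j'+1)
                = q ^ (j'+1) * qBinom q (j'+1+e+1) (j'+1) + qBinom q (j'+1+e+1) j' := rfl
            have hA := qBinom_shift hq (j'+1+e+1) (j'+1)
            have hB := qBinom_absorb hq (j'+1+e) (j'+1)
            simp only [eCoef]
            linear_combination (-(b ^ (e+2))) * hP + (a * b ^ (e+1)) * hA + b ^ e * hB
          · have : j' = n ∨ j' = n + 1 := by omega
            rcases this with rfl | rfl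
            · have hP : qBinom q (j'+2) (j'+1)
                  = q ^ (j'+1) * qBinom q (j'+1) (j'+1) + qBinom q (j'+1) j' := rfl
              rw [qBinom_self] at hP
              rw [(qBinom_eq_zero q (show j'+1 < j'+1+1 by omega) : qBinom q (j'+1) (j'+1+1) = 0),
                (qBinom_eq_zero q (show j' < j'+1 by omega) : qBinom q j' (j'+1) = 0),
                qBinom_self,
                show j'+1-j' = 1 from by omega, show j'+1-(j'+1) = 0 from by omega,
                show j'-( j'+1) = 0 from by omega, show j'+2-(j'+1) = 1 from by omega]
              simp only [eCoef]
              linear_combination (-b) * hP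
            · rw [(qBinom_eq_zero q (show n+1 < n+1+1 by omega) : qBinom q (n+1) (n+1+1) = 0),
                (qBinom_eq_zero q (show n+1 < n+1+1+1 by omega) : qBinom q (n+1) (n+1+1+1) = 0),
                (qBinom_eq_zero q (show n < n+1+1 by omega) : qBinom q n (n+1+1) = 0),
                qBinom_self, qBinom_self,
                show n+1-(n+1) = 0 from by omega, show n+2-(n+1+1) = 0 from by omega]
              simp only [eCoef]
              ring
      rw [← hs]
      simp only [map_add, map_sub]
      ring
  exact fun n => (main n).1

open Polynomial in
theorem stmt16 (q : ℝ) (hq0 : 0 < q) (hq1 : q < 1) (a b : ℂ) :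
    ∀ n : ℕ,
      hPoly (q : ℂ) n =
        ∑ k ∈ Finset.range (n + 1),
          Polynomial.C (cCoef (q : ℂ) a b n k) * ascPoly (q : ℂ) a b k := by
  have hq : ∀ m : ℕ, 1 - (q:ℂ) ^ (m + 1) ≠ 0 := by
    intro m hc
    have h1 : (q:ℝ) ^ (m+1) < 1 := pow_lt_one₀ hq0.le hq1 (Nat.succ_ne_zero m)
    have h2 : ((q:ℂ)) ^ (m+1) = 1 := by linear_combination -hc
    have h3 : (q:ℝ) ^ (m+1) = 1 := by exact_mod_cast h2
    linarith
  intro n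
  rw [hPoly_eq_asc, key_conn hq 0 a n]
  have step1 : ∀ ℓ : ℕ, ascPoly (q:ℂ) 0 a ℓ =
      ∑ k ∈ Finset.range (ℓ+1), C (qBinom q ℓ k * b ^ (ℓ-k)) * ascPoly (q:ℂ) a b k := by
    intro ℓ
    rw [asc_symm _ 0 a, key_conn hq a b ℓ]
  calc ∑ ℓ ∈ Finset.range (n+1), C (qBinom q n ℓ * a ^ (n-ℓ)) * ascPoly (q:ℂ) 0 a ℓ
      = ∑ ℓ ∈ Finset.range (n+1), ∑ k ∈ Finset.range (ℓ+1),
          C (qBinom (q:ℂ) n ℓ * qBinom (q:ℂ) ℓ k * a ^ (n-ℓ) * b ^ (ℓ-k))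
            * ascPoly (q:ℂ) a b k := by
        apply Finset.sum_congr rfl
        intro ℓ _
        rw [step1 ℓ, Finset.mul_sum]
        apply Finset.sum_congr rfl
        intro k _
        simp only [map_mul]
        ring
    _ = ∑ k ∈ Finset.Ico 0 (n+1), ∑ ℓ ∈ Finset.Ico k (n+1),
          C (qBinom (q:ℂ) n ℓ * qBinom (q:ℂ) ℓ k * a ^ (n-ℓ) * b ^ (ℓ-k))
            * ascPoly (q:ℂ) a b k := by
        simp only [Finset.range_eq_Ico]
        rw [← Finset.sum_Ico_Ico_comm 0 (n+1)
          (fun k ℓ => C (qBinom (q:ℂ) n ℓ * qBinom (q:ℂ) ℓ k * a ^ (n-ℓ) * b ^ (ℓ-k))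
            * ascPoly (q:ℂ) a b k)]
    _ = ∑ k ∈ Finset.range (n+1), C (cCoef (q:ℂ) a b n k) * ascPoly (q:ℂ) a b k := by
        simp only [Finset.range_eq_Ico]
        apply Finset.sum_congr rfl
        intro k hk
        rw [Finset.Ico_add_one_right_eq_Icc, cCoef, map_sum, Finset.sum_mul]

end
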